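/- arXiv:1808.08918 — 4 statements merged into one kernel-verified Lean document; each statement's English description precedes it below -/
import Mathlib

section
/- If a > a*, where a* is the optimal constant in the 2D Gagliardo-Nirenberg inequality, then the infimum of ∫|∇u|² − (a/2)∫|u|⁴ over u ∈ H^1(ℝ²) with ‖u‖_{L²} = 1 equals −∞. -/
open MeasureTheory Filter
open scoped Topology ENNReal

noncomputable section

abbrev Plane : Type := EuclideanSpace ℝ (Fin 2)

/-- Membership in `H¹(ℝ²)` (with the natural integrability of the quartic term). -/
def H1 (u : Plane → ℝ) : Prop :=
  Differentiable ℝ u ∧ MemLp u 2 ∧ MemLp u 4 ∧ MemLp (fun x => fderiv ℝ u x) 2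

lemma memℒp_comp_smul {F : Type*} [NormedAddCommGroup F] {f : Plane → F} {p : ℝ≥0∞}
    (hp0 : p ≠ 0) (hpt : p ≠ ∞) (hf : MemLp f p (volume : Measure Plane)) {R : ℝ} (hR : R ≠ 0)
    (hm : AEStronglyMeasurable (fun x : Plane => f (R • x)) volume) :
    MemLp (fun x : Plane => f (R • x)) p (volume : Measure Plane) := by
  rw [← memLp_norm_rpow_iff hm hp0 hpt, ENNReal.div_self hp0 hpt,
    memLp_one_iff_integrable]
  exact (hf.integrable_norm_rpow hp0 hpt).comp_smul hR

/-- If `a > a*`, where `a*` is the optimal constant in the 2D Gagliardo–Nirenberg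
inequality (with normalized optimizer `Q₀`), then the infimum of
`∫|∇u|² − (a/2)∫|u|⁴` over normalized `u ∈ H¹(ℝ²)` equals `−∞`. -/
theorem gp_energy_neg_infinity_of_gt_critical (astar a : ℝ) (hastar : 0 < astar)
    (ha : astar < a)
    (hGN : ∀ u : Plane → ℝ, H1 u →
      astar / 2 * ∫ x : Plane, (u x) ^ 4
        ≤ (∫ x : Plane, ‖fderiv ℝ u x‖ ^ 2) * ∫ x : Plane, (u x) ^ 2)
    (Q₀ : Plane → ℝ) (hQ₀ : H1 Q₀)
    (hQ₀norm : ∫ x : Plane, (Q₀ x) ^ 2 = 1)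
    (hQ₀grad : ∫ x : Plane, ‖fderiv ℝ Q₀ x‖ ^ 2 = 1)
    (hQ₀4 : astar / 2 * ∫ x : Plane, (Q₀ x) ^ 4 = 1) :
    ∀ c : ℝ, ∃ u : Plane → ℝ, H1 u ∧ (∫ x : Plane, (u x) ^ 2 = 1) ∧
      (∫ x : Plane, ‖fderiv ℝ u x‖ ^ 2) - a / 2 * (∫ x : Plane, (u x) ^ 4) < c := by
  intro c
  have hd : 0 < a / astar - 1 := by
    have : 1 < a / astar := (one_lt_div hastar).2 ha
    linarith
  set d : ℝ := a / astar - 1 with hdd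
  set t : ℝ := Real.sqrt ((|c| + 1) / d) with ht
  have harg : 0 < (|c| + 1) / d := by positivity
  have htpos : 0 < t := Real.sqrt_pos.2 harg
  have htne : t ≠ 0 := ne_of_gt htpos
  have ht2 : t ^ 2 = (|c| + 1) / d := Real.sq_sqrt harg.le
  -- the rescaled function
  set u : Plane → ℝ := fun x => t * Q₀ (t • x) with hu
  -- derivative computation
  have hder : ∀ x : Plane, fderiv ℝ u x = (t ^ 2) • fderiv ℝ Q₀ (t • x) := by
    intro x
    have h1 : HasFDerivAt (fun y : Plane => t • y)
        (t • ContinuousLinearMap.id ℝ Plane) x := (hasFDerivAt_id x).const_smul t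
    have h2 : HasFDerivAt Q₀ (fderiv ℝ Q₀ (t • x)) (t • x) := (hQ₀.1 (t • x)).hasFDerivAt
    have h3 : HasFDerivAt (fun y : Plane => Q₀ (t • y))
        ((fderiv ℝ Q₀ (t • x)).comp (t • ContinuousLinearMap.id ℝ Plane)) x := h2.comp x h1
    have h4 : HasFDerivAt u
        (t • ((fderiv ℝ Q₀ (t • x)).comp (t • ContinuousLinearMap.id ℝ Plane))) x := by
      exact h3.const_smul t
    rw [h4.fderiv, ContinuousLinearMap.comp_smul, ContinuousLinearMap.comp_id,
      smul_smul, sq]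
  have hnorm : ∀ x : Plane, ‖fderiv ℝ u x‖ = t ^ 2 * ‖fderiv ℝ Q₀ (t • x)‖ := by
    intro x
    rw [hder x, norm_smul, Real.norm_eq_abs, abs_of_nonneg (by positivity)]
  have hcontQ : Continuous Q₀ := hQ₀.1.continuous
  -- H1 membership
  have hdiff : Differentiable ℝ u := fun x => by
    have h1 : HasFDerivAt (fun y : Plane => t • y)
        (t • ContinuousLinearMap.id ℝ Plane) x := (hasFDerivAt_id x).const_smul t
    have h3 := ((hQ₀.1 (t • x)).hasFDerivAt.comp x h1).const_smul t
    exact (show HasFDerivAt u _ x from h3).differentiableAt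
  have hmeas2 : AEStronglyMeasurable (fun x : Plane => Q₀ (t • x)) volume :=
    (hcontQ.comp (continuous_const_smul t)).aestronglyMeasurable
  have hQcomp2 : MemLp (fun x : Plane => Q₀ (t • x)) 2 (volume : Measure Plane) :=
    memℒp_comp_smul two_ne_zero ENNReal.ofNat_ne_top hQ₀.2.1 htne hmeas2
  have hQcomp4 : MemLp (fun x : Plane => Q₀ (t • x)) 4 (volume : Measure Plane) :=
    memℒp_comp_smul (by norm_num) (by norm_num) hQ₀.2.2.1 htne hmeas2
  have hmeasD : AEStronglyMeasurable (fun x : Plane => fderiv ℝ Q₀ (t • x)) volume :=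
    ((measurable_fderiv ℝ Q₀).comp (measurable_const_smul t)).aestronglyMeasurable
  have hDcomp : MemLp (fun x : Plane => fderiv ℝ Q₀ (t • x)) 2 (volume : Measure Plane) :=
    memℒp_comp_smul two_ne_zero ENNReal.ofNat_ne_top hQ₀.2.2.2 htne hmeasD
  have hH1u : H1 u := by
    refine ⟨hdiff, ?_, ?_, ?_⟩
    · exact hQcomp2.const_smul t
    · exact hQcomp4.const_smul t
    · have heq : (fun x : Plane => fderiv ℝ u x)
          = (t ^ 2) • (fun x : Plane => fderiv ℝ Q₀ (t • x)) := by
        funext x; simp [hder x]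
      rw [heq]
      exact hDcomp.const_smul (t ^ 2)
  -- change of variables
  have hfr : Module.finrank ℝ Plane = 2 := finrank_euclideanSpace_fin
  have hcv : ∀ g : Plane → ℝ, ∫ x : Plane, g (t • x) = (t ^ 2)⁻¹ * ∫ x : Plane, g x := by
    intro g
    rw [MeasureTheory.Measure.integral_comp_smul_of_nonneg volume g t (hR := htpos.le), hfr,
      smul_eq_mul]
  have e2 : ∫ x : Plane, (Q₀ (t • x)) ^ 2 = (t ^ 2)⁻¹ * ∫ x : Plane, (Q₀ x) ^ 2 := by
    simpa using hcv (fun y => (Q₀ y) ^ 2)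
  have e4 : ∫ x : Plane, (Q₀ (t • x)) ^ 4 = (t ^ 2)⁻¹ * ∫ x : Plane, (Q₀ x) ^ 4 := by
    simpa using hcv (fun y => (Q₀ y) ^ 4)
  have eD : ∫ x : Plane, ‖fderiv ℝ Q₀ (t • x)‖ ^ 2
      = (t ^ 2)⁻¹ * ∫ x : Plane, ‖fderiv ℝ Q₀ x‖ ^ 2 := by
    simpa using hcv (fun y => ‖fderiv ℝ Q₀ y‖ ^ 2)
  -- the three integrals
  have hint2 : ∫ x : Plane, (u x) ^ 2 = 1 := by
    have h1 : ∀ x : Plane, (u x) ^ 2 = t ^ 2 * (Q₀ (t • x)) ^ 2 := fun x => by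
      rw [hu]; ring
    simp only [h1, integral_const_mul, e2, hQ₀norm]
    field_simp
  have hint4 : ∫ x : Plane, (u x) ^ 4 = t ^ 2 * ∫ x : Plane, (Q₀ x) ^ 4 := by
    have h1 : ∀ x : Plane, (u x) ^ 4 = t ^ 4 * (Q₀ (t • x)) ^ 4 := fun x => by
      rw [hu]; ring
    simp only [h1, integral_const_mul, e4]
    field_simp
  have hintD : ∫ x : Plane, ‖fderiv ℝ u x‖ ^ 2 = t ^ 2 := by
    have h1 : ∀ x : Plane, ‖fderiv ℝ u x‖ ^ 2 = t ^ 4 * ‖fderiv ℝ Q₀ (t • x)‖ ^ 2 := fun x => by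
      rw [hnorm x]; ring
    simp only [h1, integral_const_mul, eD, hQ₀grad]
    field_simp
  refine ⟨u, hH1u, hint2, ?_⟩
  have hI4 : ∫ x : Plane, (Q₀ x) ^ 4 = 2 / astar := by
    rw [eq_div_iff hastar.ne']
    field_simp at hQ₀4
    linarith
  rw [hintD, hint4, hI4]
  have key : t ^ 2 - a / 2 * (t ^ 2 * (2 / astar)) = -d * t ^ 2 := by
    field_simp [hdd]
    rw [hdd]
    have h : astar * (a / astar) = a := by field_simp [hastar.ne']
    linear_combination h
  rw [key, ht2]
  have : -d * ((|c| + 1) / d) = -(|c| + 1) := by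
    field_simp
  rw [this]
  have h1 := abs_nonneg c
  have h2 := neg_abs_le c
  linarith
end
end

section
/- For any bounded measurable potential V : ℝ² → ℝ and any a > a*, the Gross-Pitaevskii energy E_a = inf{∫(|∇u|² + V|u|² − (a/2)|u|⁴) : u ∈ H^1(ℝ²), ‖u‖_{L²}=1} equals −∞. -/
open MeasureTheory Filter
open scoped Topology

noncomputable section

open scoped ENNReal

lemma plane_finrank : Module.finrank ℝ Plane = 2 := by
  simpa using finrank_euclideanSpace_fin (𝕜 := ℝ) (n := 2)

lemma quasiMP_smul {t : ℝ} (ht : t ≠ 0) :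
    Measure.QuasiMeasurePreserving (fun x : Plane => t • x) volume volume := by
  refine ⟨measurable_const_smul t, ?_⟩
  rw [Measure.map_addHaar_smul volume ht]
  exact Measure.smul_absolutelyContinuous

lemma memLp_comp_smul {F : Type*} [NormedAddCommGroup F] {f : Plane → F} {p : ENNReal}
    (hp0 : p ≠ 0) (hpt : p ≠ ∞) (h : MemLp f p (volume : Measure Plane)) {t : ℝ} (ht : t ≠ 0) :
    MemLp (fun x => f (t • x)) p (volume : Measure Plane) := by
  have hsm : AEStronglyMeasurable (fun x => f (t • x)) (volume : Measure Plane) :=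
    h.aestronglyMeasurable.comp_quasiMeasurePreserving (quasiMP_smul ht)
  have h1 : MemLp (fun x : Plane => ‖f x‖ ^ p.toReal) (p / p) volume :=
    (memLp_norm_rpow_iff h.aestronglyMeasurable hp0 hpt).2 h
  rw [ENNReal.div_self hp0 hpt, memLp_one_iff_integrable] at h1
  have h2 : Integrable (fun x : Plane => ‖f (t • x)‖ ^ p.toReal) volume := h1.comp_smul ht
  have h3 := (memLp_norm_rpow_iff hsm hp0 hpt).1 (by
    rw [ENNReal.div_self hp0 hpt, memLp_one_iff_integrable]; exact h2)
  exact h3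

lemma integral_scale (g : Plane → ℝ) {t : ℝ} (ht : 0 ≤ t) :
    ∫ x : Plane, g (t • x) = (t ^ 2)⁻¹ * ∫ x : Plane, g x := by
  have := MeasureTheory.Measure.integral_comp_smul_of_nonneg (volume : Measure Plane) g t (hR := ht)
  rwa [plane_finrank, smul_eq_mul] at this

lemma fderiv_scale {Q : Plane → ℝ} (hQ : Differentiable ℝ Q) (t : ℝ) (x : Plane) :
    fderiv ℝ (fun y => t * Q (t • y)) x = (t * t) • fderiv ℝ Q (t • x) := by
  have h1 : HasFDerivAt (fun y : Plane => t • y) (t • ContinuousLinearMap.id ℝ Plane) x :=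
    (hasFDerivAt_id x).const_smul t
  have h2 : HasFDerivAt (fun y : Plane => Q (t • y))
      ((fderiv ℝ Q (t • x)).comp (t • ContinuousLinearMap.id ℝ Plane)) x :=
    ((hQ (t • x)).hasFDerivAt).comp x h1
  have h3 : HasFDerivAt (fun y : Plane => t * Q (t • y))
      (t • ((fderiv ℝ Q (t • x)).comp (t • ContinuousLinearMap.id ℝ Plane))) x := by
    simpa [smul_eq_mul] using h2.const_mul t
  have h4 : (t • ((fderiv ℝ Q (t • x)).comp (t • ContinuousLinearMap.id ℝ Plane)))
      = (t * t) • fderiv ℝ Q (t • x) := by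
    ext v
    simp only [ContinuousLinearMap.smul_apply, ContinuousLinearMap.coe_comp',
      Function.comp_apply, ContinuousLinearMap.coe_id', id_eq, (fderiv ℝ Q (t • x)).map_smul,
      smul_eq_mul]
    ring
  rw [h3.fderiv, h4]

theorem gp_main (V : Plane → ℝ) (hVmeas : Measurable V)
    (C : ℝ) (hVbdd : ∀ x, |V x| ≤ C)
    (astar a : ℝ) (hastar : 0 < astar) (ha : astar < a)
    (Q₀ : Plane → ℝ) (hQ₀d : Differentiable ℝ Q₀) (hQ₀2 : MemLp Q₀ 2 (volume : Measure Plane))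
    (hQ₀4m : MemLp Q₀ 4 (volume : Measure Plane))
    (hQ₀fd : MemLp (fun x => fderiv ℝ Q₀ x) 2 (volume : Measure Plane))
    (hQ₀norm : ∫ x : Plane, (Q₀ x) ^ 2 = 1)
    (hQ₀grad : ∫ x : Plane, ‖fderiv ℝ Q₀ x‖ ^ 2 = 1)
    (hQ₀4 : astar / 2 * ∫ x : Plane, (Q₀ x) ^ 4 = 1) (c : ℝ) :
    ∃ u : Plane → ℝ, (Differentiable ℝ u ∧ MemLp u 2 ∧ MemLp u 4 ∧
        MemLp (fun x => fderiv ℝ u x) 2) ∧ (∫ x : Plane, (u x) ^ 2 = 1) ∧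
      (∫ x : Plane, ‖fderiv ℝ u x‖ ^ 2) + (∫ x : Plane, V x * (u x) ^ 2)
        - a / 2 * (∫ x : Plane, (u x) ^ 4) < c := by
  set r : ℝ := a / astar with hr_def
  have hr : 1 < r := (one_lt_div hastar).2 ha
  set s : ℝ := max 1 ((C - c + 1) / (r - 1)) with hs_def
  have hs1 : (1 : ℝ) ≤ s := le_max_left _ _
  have hspos : 0 < s := lt_of_lt_of_le one_pos hs1
  have hks : C - c + 1 ≤ (r - 1) * s := by
    have h := le_max_right 1 ((C - c + 1) / (r - 1))
    rw [div_le_iff₀ (by linarith : (0:ℝ) < r - 1)] at h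
    linarith [h]
  set t : ℝ := Real.sqrt s with ht_def
  have htpos : 0 < t := Real.sqrt_pos.2 hspos
  have ht : t ≠ 0 := htpos.ne'
  have ht2 : t ^ 2 = s := Real.sq_sqrt hspos.le
  set u : Plane → ℝ := fun y => t * Q₀ (t • y) with hu_def
  have hud : Differentiable ℝ u := (hQ₀d.comp (differentiable_id.const_smul t)).const_mul t
  have hfd : ∀ x, fderiv ℝ u x = (t * t) • fderiv ℝ Q₀ (t • x) := fun x => fderiv_scale hQ₀d t x
  -- L² norm of u
  have hInt2 : ∫ x : Plane, (u x) ^ 2 = 1 := by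
    have : ∀ x : Plane, (u x) ^ 2 = t ^ 2 * (fun y => Q₀ y ^ 2) (t • x) := by
      intro x; simp [hu_def, mul_pow]
    calc ∫ x : Plane, (u x) ^ 2 = ∫ x : Plane, t ^ 2 * (fun y => Q₀ y ^ 2) (t • x) := by
          simp_rw [this]
      _ = t ^ 2 * ∫ x : Plane, (fun y => Q₀ y ^ 2) (t • x) := integral_const_mul _ _
      _ = t ^ 2 * ((t ^ 2)⁻¹ * ∫ x : Plane, Q₀ x ^ 2) :=
          congrArg (t ^ 2 * ·) (integral_scale (fun y => Q₀ y ^ 2) htpos.le)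
      _ = 1 := by rw [hQ₀norm]; field_simp
  -- L⁴ term
  have hInt4 : ∫ x : Plane, (u x) ^ 4 = t ^ 2 * (2 / astar) := by
    have hq4 : ∫ x : Plane, (Q₀ x) ^ 4 = 2 / astar := by
      field_simp at hQ₀4 ⊢; linarith [hQ₀4]
    have h1 : ∀ x : Plane, (u x) ^ 4 = t ^ 4 * (fun y => Q₀ y ^ 4) (t • x) := by
      intro x; simp [hu_def, mul_pow]
    calc ∫ x : Plane, (u x) ^ 4 = ∫ x : Plane, t ^ 4 * (fun y => Q₀ y ^ 4) (t • x) := by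
          simp_rw [h1]
      _ = t ^ 4 * ∫ x : Plane, (fun y => Q₀ y ^ 4) (t • x) := integral_const_mul _ _
      _ = t ^ 4 * ((t ^ 2)⁻¹ * ∫ x : Plane, Q₀ x ^ 4) :=
          congrArg (t ^ 4 * ·) (integral_scale (fun y => Q₀ y ^ 4) htpos.le)
      _ = t ^ 4 * ((t ^ 2)⁻¹ * (2 / astar)) := by rw [hq4]
      _ = t ^ 2 * (2 / astar) := by
          rw [show (t:ℝ) ^ 4 = t ^ 2 * t ^ 2 by ring]
          field_simp
  -- gradient term
  have hIntG : ∫ x : Plane, ‖fderiv ℝ u x‖ ^ 2 = t ^ 2 := by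
    have h1 : ∀ x : Plane, ‖fderiv ℝ u x‖ ^ 2
        = t ^ 4 * (fun y => ‖fderiv ℝ Q₀ y‖ ^ 2) (t • x) := by
      intro x
      rw [hfd x, norm_smul, Real.norm_eq_abs, abs_of_pos (mul_pos htpos htpos), mul_pow]
      ring
    calc ∫ x : Plane, ‖fderiv ℝ u x‖ ^ 2
        = ∫ x : Plane, t ^ 4 * (fun y => ‖fderiv ℝ Q₀ y‖ ^ 2) (t • x) := by simp_rw [h1]
      _ = t ^ 4 * ∫ x : Plane, (fun y => ‖fderiv ℝ Q₀ y‖ ^ 2) (t • x) := integral_const_mul _ _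
      _ = t ^ 4 * ((t ^ 2)⁻¹ * ∫ x : Plane, ‖fderiv ℝ Q₀ x‖ ^ 2) :=
          congrArg (t ^ 4 * ·) (integral_scale (fun y => ‖fderiv ℝ Q₀ y‖ ^ 2) htpos.le)
      _ = t ^ 4 * ((t ^ 2)⁻¹ * 1) := by rw [hQ₀grad]
      _ = t ^ 2 := by
          rw [show (t:ℝ) ^ 4 = t ^ 2 * t ^ 2 by ring]
          field_simp
  -- membership
  have hu2 : MemLp u 2 (volume : Measure Plane) :=
    (memLp_comp_smul two_ne_zero ENNReal.ofNat_ne_top hQ₀2 ht).const_mul t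
  have hu4 : MemLp u 4 (volume : Measure Plane) :=
    (memLp_comp_smul (by norm_num) (by norm_num) hQ₀4m ht).const_mul t
  have hufd : MemLp (fun x => fderiv ℝ u x) 2 (volume : Measure Plane) := by
    have h := (memLp_comp_smul two_ne_zero ENNReal.ofNat_ne_top hQ₀fd ht).const_smul (t * t)
    have he : (fun x => fderiv ℝ u x) = (t * t) • fun x => fderiv ℝ Q₀ (t • x) := by
      funext x; rw [hfd x]; rfl
    rw [he]; exact h
  -- potential term
  have hsq_int : Integrable (fun x : Plane => (u x) ^ 2) volume := by
    exact (memLp_two_iff_integrable_sq hud.continuous.aestronglyMeasurable).1 hu2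
  have hVint : Integrable (fun x : Plane => V x * (u x) ^ 2) volume :=
    hsq_int.bdd_mul hVmeas.aestronglyMeasurable (Filter.Eventually.of_forall fun x => by
      simpa [Real.norm_eq_abs] using hVbdd x)
  have hVle : ∫ x : Plane, V x * (u x) ^ 2 ≤ C := by
    have h1 : ∫ x : Plane, V x * (u x) ^ 2 ≤ ∫ x : Plane, C * (u x) ^ 2 := by
      refine integral_mono hVint (hsq_int.const_mul C) fun x => ?_
      exact mul_le_mul_of_nonneg_right ((le_abs_self _).trans (hVbdd x)) (sq_nonneg _)
    rw [integral_const_mul, hInt2, mul_one] at h1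
    exact h1
  refine ⟨u, ⟨hud, hu2, hu4, hufd⟩, hInt2, ?_⟩
  rw [hIntG, hInt4]
  have hconv : a / 2 * (t ^ 2 * (2 / astar)) = r * t ^ 2 := by
    rw [hr_def]; field_simp
  rw [hconv, ht2]
  nlinarith [hks, hVle, hr]

/-- For any bounded measurable potential `V` and `a > a*` (the optimal Gagliardo–Nirenberg
constant, with normalized optimizer `Q₀`), the Gross-Pitaevskii ground state energy
`E_a = inf {∫(|∇u|² + V|u|² − (a/2)|u|⁴) : ‖u‖_{L²} = 1}` equals `−∞`. -/
theorem gp_energy_neg_infinity_with_potential (V : Plane → ℝ) (hVmeas : Measurable V)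
    (C : ℝ) (hVbdd : ∀ x, |V x| ≤ C)
    (astar a : ℝ) (hastar : 0 < astar) (ha : astar < a)
    (hGN : ∀ u : Plane → ℝ, H1 u →
      astar / 2 * ∫ x : Plane, (u x) ^ 4
        ≤ (∫ x : Plane, ‖fderiv ℝ u x‖ ^ 2) * ∫ x : Plane, (u x) ^ 2)
    (Q₀ : Plane → ℝ) (hQ₀ : H1 Q₀)
    (hQ₀norm : ∫ x : Plane, (Q₀ x) ^ 2 = 1)
    (hQ₀grad : ∫ x : Plane, ‖fderiv ℝ Q₀ x‖ ^ 2 = 1)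
    (hQ₀4 : astar / 2 * ∫ x : Plane, (Q₀ x) ^ 4 = 1) :
    ∀ c : ℝ, ∃ u : Plane → ℝ, H1 u ∧ (∫ x : Plane, (u x) ^ 2 = 1) ∧
      (∫ x : Plane, ‖fderiv ℝ u x‖ ^ 2) + (∫ x : Plane, V x * (u x) ^ 2)
        - a / 2 * (∫ x : Plane, (u x) ^ 4) < c := by
  intro c
  obtain ⟨hd, h2, h4, hf⟩ := hQ₀
  obtain ⟨u, hu, hn, he⟩ := gp_main V hVmeas C hVbdd astar a hastar ha Q₀ hd h2 h4 hf
    hQ₀norm hQ₀grad hQ₀4 c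
  exact ⟨u, hu, hn, he⟩
end
end

section
/- Let {f_n} ⊂ H^1(ℝ²) satisfy ‖f_n‖_{L²} = ‖∇f_n‖_{L²} = 1 and (a*/2)‖f_n‖_{L⁴}⁴ → 1. If the dichotomy alternative of concentration-compactness held for {f_n} with splitting parameter λ ∈ (0,1), then 1 ≥ min{1/λ, 1/(1−λ)}, a contradiction; hence dichotomy cannot occur for such almost-optimizing sequences of the Gagliardo-Nirenberg inequality. -/
open MeasureTheory Filter
open scoped Topology

open Metric Function ContinuousLinearMap
open scoped Convolution ENNReal

noncomputable section

lemma exists_cutoff (S T : Set Plane) (hS : S.Nonempty) {R : ℝ} (hR : 0 < R)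
    (hsep : ∀ x ∈ S, ∀ y ∈ T, R ≤ dist x y) :
    ∃ χ : Plane → ℝ, Differentiable ℝ χ ∧ (∀ x, 0 ≤ χ x) ∧ (∀ x, χ x ≤ 1) ∧
      (∀ x ∈ S, χ x = 1) ∧ (∀ x ∈ T, χ x = 0) ∧ ∀ x, ‖fderiv ℝ χ x‖ ≤ 3 / R := by
  have hc : 0 < 3 / R := by positivity
  set c : ℝ := 3 / R with hcdef
  set h : Plane → ℝ := fun x => max 0 (min 1 (2 - c * infDist x S)) with hdef
  have hlb : ∀ x, 0 ≤ h x := fun x => le_max_left _ _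
  have hub : ∀ x, h x ≤ 1 := fun x => max_le (by norm_num) (min_le_left _ _)
  have hone : ∀ x : Plane, infDist x S ≤ R / 3 → h x = 1 := by
    intro x hx
    have hd : 0 ≤ infDist x S := infDist_nonneg
    have h1 : c * infDist x S ≤ 1 := by
      have : c * infDist x S ≤ c * (R / 3) := by
        exact mul_le_mul_of_nonneg_left hx hc.le
      have h2 : c * (R / 3) = 1 := by
        field_simp [hcdef]
        rw [hcdef]; field_simp
      linarith
    have : min 1 (2 - c * infDist x S) = 1 := min_eq_left (by linarith)
    simp [hdef, this]
  have hzero : ∀ x : Plane, 2 * R / 3 ≤ infDist x S → h x = 0 := by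
    intro x hx
    have h1 : 2 ≤ c * infDist x S := by
      have : c * (2 * R / 3) ≤ c * infDist x S :=
        mul_le_mul_of_nonneg_left hx hc.le
      have h2 : c * (2 * R / 3) = 2 := by field_simp [hcdef]; rw [hcdef]; field_simp
      linarith
    have : min 1 (2 - c * infDist x S) ≤ 0 := le_trans (min_le_right _ _) (by linarith)
    simp only [hdef]
    exact max_eq_left this
  have hlip : ∀ x y : Plane, |h x - h y| ≤ c * dist x y := by
    intro x y
    have l1 : |h x - h y| ≤ |(2 - c * infDist x S) - (2 - c * infDist y S)| := by
      have m1 : |max 0 (min 1 (2 - c * infDist x S)) - max 0 (min 1 (2 - c * infDist y S))|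
          ≤ |min 1 (2 - c * infDist x S) - min 1 (2 - c * infDist y S)| := by
        have := abs_max_sub_max_le_abs (min 1 (2 - c * infDist x S))
          (min 1 (2 - c * infDist y S)) 0
        simpa [max_comm] using this
      have m2 : |min 1 (2 - c * infDist x S) - min 1 (2 - c * infDist y S)|
          ≤ |(2 - c * infDist x S) - (2 - c * infDist y S)| := by
        have := abs_min_sub_min_le_max (1:ℝ) (2 - c * infDist x S) 1 (2 - c * infDist y S)
        simpa using this
      exact le_trans m1 m2
    have l2 : |(2 - c * infDist x S) - (2 - c * infDist y S)|
        = c * |infDist x S - infDist y S| := by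
      have e : (2 - c * infDist x S) - (2 - c * infDist y S)
          = c * (infDist y S - infDist x S) := by ring
      rw [e, abs_mul, abs_of_pos hc, abs_sub_comm]
    have l3 : |infDist x S - infDist y S| ≤ dist x y := by
      rw [abs_sub_le_iff]
      constructor
      · linarith [infDist_le_infDist_add_dist (x := x) (y := y) (s := S)]
      · linarith [infDist_le_infDist_add_dist (x := y) (y := x) (s := S), dist_comm x y]
    calc |h x - h y| ≤ c * |infDist x S - infDist y S| := by rw [← l2]; exact l1
      _ ≤ c * dist x y := mul_le_mul_of_nonneg_left l3 hc.le
  have hcont : Continuous h := by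
    apply Continuous.max continuous_const
    apply Continuous.min continuous_const
    exact continuous_const.sub (continuous_const.mul (continuous_infDist_pt S))
  -- the bump function and the mollified cutoff
  set φ : ContDiffBump (0 : Plane) := ⟨R/6, R/3, by positivity, by linarith⟩ with hφdef
  have hφout : φ.rOut = R/3 := rfl
  set χ : Plane → ℝ := (φ.normed volume) ⋆[lsmul ℝ ℝ, volume] h with hχdef
  have χdef : ∀ x : Plane, χ x = ∫ t : Plane, φ.normed volume t * h (x - t) := by
    intro x
    simp [hχdef, convolution_def, smul_eq_mul]
  have ιint : ∀ x : Plane, Integrable (fun t : Plane => φ.normed volume t * h (x - t)) volume := by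
    intro x
    have hm : AEStronglyMeasurable (fun t : Plane => h (x - t)) volume :=
      (hcont.comp (continuous_const.sub continuous_id)).aestronglyMeasurable
    have := (φ.integrable_normed (μ := volume)).bdd_mul hm (c := 1) (Eventually.of_forall fun t => by
      rw [Real.norm_eq_abs, abs_of_nonneg (hlb _)]; exact hub _)
    exact this.congr (Eventually.of_forall fun t => mul_comm _ _)
  have χ1 : ∀ x ∈ S, χ x = 1 := by
    intro x hx
    have hgconst : ∀ y ∈ ball x φ.rOut, h y = h x := by
      intro y hy
      have h0 : infDist x S = 0 := infDist_zero_of_mem hx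
      have h1 : infDist y S ≤ R / 3 := by
        have := infDist_le_infDist_add_dist (x := y) (y := x) (s := S)
        have hd : dist y x < R/3 := by simpa [hφout] using mem_ball.mp hy
        linarith
      rw [hone y h1, hone x (by simp [h0]; positivity)]
    have := ContDiffBump.normed_convolution_eq_right (φ := φ) (μ := volume) hgconst
    rw [hχdef, this, hone x (by simp [infDist_zero_of_mem hx]; positivity)]
  have χ0 : ∀ x ∈ T, χ x = 0 := by
    intro x hx
    have hxS : R ≤ infDist x S := by
      by_contra hcon
      push_neg at hcon
      obtain ⟨y, hyS, hyd⟩ := (infDist_lt_iff hS).mp hcon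
      have := hsep y hyS x hx
      rw [dist_comm] at this
      linarith
    have hgconst : ∀ y ∈ ball x φ.rOut, h y = h x := by
      intro y hy
      have hd : dist x y < R/3 := by
        have := mem_ball.mp hy; rw [dist_comm]; simpa [hφout] using this
      have h1 : 2*R/3 ≤ infDist y S := by
        have := infDist_le_infDist_add_dist (x := x) (y := y) (s := S)
        linarith
      rw [hzero y h1, hzero x (by linarith)]
    have := ContDiffBump.normed_convolution_eq_right (φ := φ) (μ := volume) hgconst
    rw [hχdef, this, hzero x (by linarith)]
  have hφnn : ∀ t : Plane, 0 ≤ φ.normed volume t := fun t => φ.nonneg_normed t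
  have χnn : ∀ x, 0 ≤ χ x := by
    intro x
    rw [χdef x]
    exact integral_nonneg fun t => mul_nonneg (φ.nonneg_normed t) (hlb _)
  have χle1 : ∀ x, χ x ≤ 1 := by
    intro x
    rw [χdef x]
    calc ∫ t : Plane, φ.normed volume t * h (x - t)
        ≤ ∫ t : Plane, φ.normed volume t := by
          apply integral_mono (ιint x) (φ.integrable_normed (μ := volume))
          intro t
          show φ.normed volume t * h (x - t) ≤ φ.normed volume t
          nth_rewrite 2 [← mul_one (φ.normed volume t)]
          exact mul_le_mul_of_nonneg_left (hub _) (hφnn t)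
      _ = 1 := φ.integral_normed
  have χdiff : Differentiable ℝ χ := by
    intro x
    have := HasCompactSupport.hasFDerivAt_convolution_left (μ := volume) (lsmul ℝ ℝ)
      (φ.hasCompactSupport_normed (μ := volume)) (φ.contDiff_normed (μ := volume) (n := 1))
      (hcont.locallyIntegrable (μ := volume)) x
    exact this.differentiableAt
  have χlip : LipschitzWith (Real.toNNReal c) χ := by
    apply LipschitzWith.of_dist_le_mul
    intro x y
    rw [Real.dist_eq, χdef x, χdef y, ← integral_sub (ιint x) (ιint y)]
    have step1 : |∫ t : Plane, (φ.normed volume t * h (x - t) - φ.normed volume t * h (y - t))|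
        ≤ ∫ t : Plane, φ.normed volume t * (c * dist x y) := by
      have habs : ∀ t : Plane, |φ.normed volume t * h (x - t) - φ.normed volume t * h (y - t)|
          ≤ φ.normed volume t * (c * dist x y) := by
        intro t
        rw [← mul_sub, abs_mul, abs_of_nonneg (hφnn t)]
        apply mul_le_mul_of_nonneg_left _ (hφnn t)
        calc |h (x - t) - h (y - t)| ≤ c * dist (x - t) (y - t) := hlip _ _
          _ = c * dist x y := by rw [dist_sub_right]
      calc |∫ t : Plane, (φ.normed volume t * h (x - t) - φ.normed volume t * h (y - t))|
          ≤ ∫ t : Plane, |φ.normed volume t * h (x - t) - φ.normed volume t * h (y - t)| :=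
            by simpa [Real.norm_eq_abs] using
              norm_integral_le_integral_norm
                (fun t : Plane => φ.normed volume t * h (x - t) - φ.normed volume t * h (y - t))
        _ ≤ ∫ t : Plane, φ.normed volume t * (c * dist x y) := by
            apply integral_mono ((ιint x).sub (ιint y)).abs
              ((φ.integrable_normed (μ := volume)).mul_const _)
            exact habs
    have step2 : (∫ t : Plane, φ.normed volume t * (c * dist x y)) = c * dist x y := by
      rw [integral_mul_const, φ.integral_normed, one_mul]
    rw [step2] at step1
    calc |∫ t : Plane, (φ.normed volume t * h (x - t) - φ.normed volume t * h (y - t))|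
        ≤ c * dist x y := step1
      _ = (Real.toNNReal c : ℝ) * dist x y := by rw [Real.coe_toNNReal c hc.le]
  have χfd : ∀ x, ‖fderiv ℝ χ x‖ ≤ 3 / R := by
    intro x
    have := (χdiff x).hasFDerivAt.le_of_lipschitz χlip
    rwa [Real.coe_toNNReal c hc.le] at this
  exact ⟨χ, χdiff, χnn, χle1, χ1, χ0, χfd⟩

lemma int_sq {u : Plane → ℝ} (hu : MemLp u 2 (volume : Measure Plane)) :
    Integrable (fun x => (u x) ^ 2) volume := by
  have h := hu.integrable_norm_rpow two_ne_zero ENNReal.ofNat_ne_top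
  refine h.congr (Eventually.of_forall fun x => ?_)
  show ‖u x‖ ^ (2:ℝ≥0∞).toReal = u x ^ 2
  have e : (2:ℝ≥0∞).toReal = ((2:ℕ):ℝ) := by norm_num
  rw [e, Real.rpow_natCast, Real.norm_eq_abs, sq_abs]

lemma int_pow4 {u : Plane → ℝ} (hu : MemLp u 4 (volume : Measure Plane)) :
    Integrable (fun x => (u x) ^ 4) volume := by
  have h := hu.integrable_norm_rpow (by norm_num) (by norm_num)
  refine h.congr (Eventually.of_forall fun x => ?_)
  show ‖u x‖ ^ (4:ℝ≥0∞).toReal = u x ^ 4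
  have e : (4:ℝ≥0∞).toReal = ((4:ℕ):ℝ) := by norm_num
  rw [e, Real.rpow_natCast, Real.norm_eq_abs, pow_abs, abs_of_nonneg (by positivity)]

lemma int_normsq {E : Type*} [NormedAddCommGroup E] {w : Plane → E}
    (hw : MemLp w 2 (volume : Measure Plane)) :
    Integrable (fun x => ‖w x‖ ^ 2) volume := by
  have h := hw.integrable_norm_rpow two_ne_zero ENNReal.ofNat_ne_top
  refine h.congr (Eventually.of_forall fun x => ?_)
  show ‖w x‖ ^ (2:ℝ≥0∞).toReal = ‖w x‖ ^ 2
  have e : (2:ℝ≥0∞).toReal = ((2:ℕ):ℝ) := by norm_num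
  rw [e, Real.rpow_natCast]

set_option maxHeartbeats 2000000 in
/-- Dichotomy cannot occur for almost-optimizing sequences of the 2D Gagliardo–Nirenberg
inequality: if `‖f_n‖_{L²} = ‖∇f_n‖_{L²} = 1`, `(a*/2)‖f_n‖_{L⁴}⁴ → 1`, and the dichotomy
alternative held with parameter `λ ∈ (0,1)`, one would get `1 ≥ min{1/λ, 1/(1−λ)}`,
a contradiction. -/
theorem no_dichotomy_for_GN_optimizing_sequences (astar : ℝ) (hastar : 0 < astar)
    (hGN : ∀ u : Plane → ℝ, H1 u →
      astar / 2 * ∫ x : Plane, (u x) ^ 4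
        ≤ (∫ x : Plane, ‖fderiv ℝ u x‖ ^ 2) * ∫ x : Plane, (u x) ^ 2)
    (f : ℕ → Plane → ℝ) (hf : ∀ n, H1 (f n))
    (hnorm : ∀ n, ∫ x : Plane, (f n x) ^ 2 = 1)
    (hgrad : ∀ n, ∫ x : Plane, ‖fderiv ℝ (f n) x‖ ^ 2 = 1)
    (hL4 : Tendsto (fun n => astar / 2 * ∫ x : Plane, (f n x) ^ 4) atTop (𝓝 1))
    (lam : ℝ) (h0 : 0 < lam) (h1 : lam < 1)
    (f1 f2 : ℕ → Plane → ℝ) (hf1 : ∀ n, H1 (f1 n)) (hf2 : ∀ n, H1 (f2 n))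
    (hm1 : Tendsto (fun n => ∫ x : Plane, (f1 n x) ^ 2) atTop (𝓝 lam))
    (hm2 : Tendsto (fun n => ∫ x : Plane, (f2 n x) ^ 2) atTop (𝓝 (1 - lam)))
    (hdisj : ∀ n, Disjoint (Function.support (f1 n)) (Function.support (f2 n)))
    (hdist : ∀ r : ℝ, ∀ᶠ n in atTop, ∀ x ∈ Function.support (f1 n),
      ∀ y ∈ Function.support (f2 n), r ≤ dist x y)
    (hLp : ∀ p : ℝ, 2 ≤ p →
      Tendsto (fun n => ∫ x : Plane, |f n x - f1 n x - f2 n x| ^ p) atTop (𝓝 0))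
    (hgradsplit : 0 ≤ liminf (fun n => (∫ x : Plane, ‖fderiv ℝ (f n) x‖ ^ 2)
      - (∫ x : Plane, ‖fderiv ℝ (f1 n) x‖ ^ 2)
      - ∫ x : Plane, ‖fderiv ℝ (f2 n) x‖ ^ 2) atTop) :
    False := by
  classical
  set m : ℝ := max lam (1 - lam) with hmdef
  have hml : lam ≤ m := le_max_left _ _
  have hmr : 1 - lam ≤ m := le_max_right _ _
  have hmlt1 : m < 1 := max_lt h1 (by linarith)
  have hmhalf : (1:ℝ)/2 ≤ m := by
    rcases le_total lam (1/2) with h | h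
    · linarith
    · linarith
  set ε : ℝ := (1 - m) / 100 with hεdef
  have hεpos : 0 < ε := by rw [hεdef]; linarith
  have hεle : ε ≤ 1/200 := by rw [hεdef]; linarith
  set η : ℝ := 1/ε with hηdef
  have hηpos : 0 < η := by positivity
  have hη : ε * η = 1 := by rw [hηdef]; field_simp
  set g : ℕ → Plane → ℝ := fun n x => f n x - f1 n x - f2 n x with hgdef
  have hgmem2 : ∀ n, MemLp (g n) 2 (volume : Measure Plane) := fun n => by
    exact ((hf n).2.1.sub (hf1 n).2.1).sub (hf2 n).2.1
  have hgmem4 : ∀ n, MemLp (g n) 4 (volume : Measure Plane) := fun n => by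
    exact ((hf n).2.2.1.sub (hf1 n).2.2.1).sub (hf2 n).2.2.1
  have hg2 : Tendsto (fun n => ∫ x : Plane, (g n x)^2) atTop (𝓝 0) := by
    have h := hLp 2 le_rfl
    have e : (fun n => ∫ x : Plane, |f n x - f1 n x - f2 n x| ^ (2:ℝ))
        = fun n => ∫ x : Plane, (g n x)^2 := by
      funext n
      refine integral_congr_ae (Eventually.of_forall fun x => ?_)
      show |f n x - f1 n x - f2 n x| ^ (2:ℝ) = (g n x)^2
      rw [show (2:ℝ) = ((2:ℕ):ℝ) by norm_num, Real.rpow_natCast, sq_abs]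
    rwa [e] at h
  have hg4 : Tendsto (fun n => ∫ x : Plane, (g n x)^4) atTop (𝓝 0) := by
    have h := hLp 4 (by norm_num)
    have e : (fun n => ∫ x : Plane, |f n x - f1 n x - f2 n x| ^ (4:ℝ))
        = fun n => ∫ x : Plane, (g n x)^4 := by
      funext n
      refine integral_congr_ae (Eventually.of_forall fun x => ?_)
      show |f n x - f1 n x - f2 n x| ^ (4:ℝ) = (g n x)^4
      rw [show (4:ℝ) = ((4:ℕ):ℝ) by norm_num, Real.rpow_natCast, pow_abs,
        abs_of_nonneg (by positivity)]
    rwa [e] at h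
  have E1 : ∀ᶠ n in atTop, 1 - ε < astar / 2 * ∫ x : Plane, (f n x)^4 :=
    hL4.eventually (eventually_gt_nhds (by linarith))
  have E2 : ∀ᶠ n in atTop, ∫ x : Plane, (g n x)^2 < ε^3 :=
    hg2.eventually (eventually_lt_nhds (by positivity))
  have E3 : ∀ᶠ n in atTop, ∫ x : Plane, (g n x)^4 < ε * (2 / astar) :=
    hg4.eventually (eventually_lt_nhds (by positivity))
  have E4 : ∀ᶠ n in atTop, ∫ x : Plane, (f1 n x)^2 < lam + ε :=
    hm1.eventually (eventually_lt_nhds (by linarith))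
  have E5 : ∀ᶠ n in atTop, ∫ x : Plane, (f2 n x)^2 < 1 - lam + ε :=
    hm2.eventually (eventually_lt_nhds (by linarith))
  have E6 : ∀ᶠ n in atTop, lam / 2 < ∫ x : Plane, (f1 n x)^2 :=
    hm1.eventually (eventually_gt_nhds (by linarith))
  have E7 := hdist (3 / ε)
  obtain ⟨n, hA, hg2n, hg4n, hM1, hM2, hM1pos, hsepn⟩ :=
    (E1.and (E2.and (E3.and (E4.and (E5.and (E6.and E7)))))).exists
  obtain ⟨hFdiff, hF2, hF4, hFgrad⟩ := hf n
  have hS : (Function.support (f1 n)).Nonempty := by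
    rcases Set.eq_empty_or_nonempty (Function.support (f1 n)) with h | h
    · exfalso
      have h0 : ∀ x, f1 n x = 0 := by
        intro x
        by_contra hc
        exact (Set.eq_empty_iff_forall_notMem.mp h x) (Function.mem_support.mpr hc)
      have hz : ∫ x : Plane, (f1 n x)^2 = 0 := by simp [h0]
      rw [hz] at hM1pos
      linarith
    · exact h
  have hRpos : 0 < 3 / ε := by positivity
  obtain ⟨χ, χdiff, χnn, χle1, χS, χT, χfd'⟩ :=
    exists_cutoff (Function.support (f1 n)) (Function.support (f2 n)) hS hRpos hsepn
  have χfd : ∀ x, ‖fderiv ℝ χ x‖ ≤ ε := by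
    intro x
    have h3 : 3 / (3 / ε) = ε := by field_simp
    have := χfd' x
    rwa [h3] at this
  set u1 : Plane → ℝ := fun x => χ x * f n x with hu1def
  set u2 : Plane → ℝ := fun x => (1 - χ x) * f n x with hu2def
  have hχf1 : ∀ x, χ x * f1 n x = f1 n x := by
    intro x
    by_cases hx : f1 n x = 0
    · simp [hx]
    · rw [χS x (Function.mem_support.mpr hx), one_mul]
  have hχf2 : ∀ x, χ x * f2 n x = 0 := by
    intro x
    by_cases hx : f2 n x = 0
    · simp [hx]
    · rw [χT x (Function.mem_support.mpr hx), zero_mul]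
  have hfsplit : ∀ x, f n x = f1 n x + f2 n x + g n x := by
    intro x
    show f n x = f1 n x + f2 n x + (f n x - f1 n x - f2 n x)
    ring
  have key1 : ∀ x, u1 x = f1 n x + χ x * g n x := by
    intro x
    calc u1 x = χ x * (f1 n x + f2 n x + g n x) := by rw [hu1def, ← hfsplit x]
      _ = (χ x * f1 n x) + (χ x * f2 n x) + χ x * g n x := by ring
      _ = f1 n x + χ x * g n x := by rw [hχf1 x, hχf2 x]; ring
  have key2 : ∀ x, u2 x = f2 n x + (1 - χ x) * g n x := by
    intro x
    calc u2 x = (1 - χ x) * (f1 n x + f2 n x + g n x) := by rw [hu2def, ← hfsplit x]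
      _ = (f1 n x - χ x * f1 n x) + (f2 n x - χ x * f2 n x) + (1 - χ x) * g n x := by ring
      _ = f2 n x + (1 - χ x) * g n x := by rw [hχf1 x, hχf2 x]; ring
  -- memberships
  have hu1cont : Continuous u1 := (χdiff.continuous.mul hFdiff.continuous)
  have hu2cont : Continuous u2 :=
    ((continuous_const.sub χdiff.continuous).mul hFdiff.continuous)
  have habs1 : ∀ x, ‖u1 x‖ ≤ ‖f n x‖ := by
    intro x
    rw [hu1def]
    show ‖χ x * f n x‖ ≤ ‖f n x‖
    rw [norm_mul]
    nth_rewrite 2 [← one_mul ‖f n x‖]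
    apply mul_le_mul_of_nonneg_right _ (norm_nonneg _)
    rw [Real.norm_eq_abs, abs_of_nonneg (χnn x)]
    exact χle1 x
  have habs2 : ∀ x, ‖u2 x‖ ≤ ‖f n x‖ := by
    intro x
    rw [hu2def]
    show ‖(1 - χ x) * f n x‖ ≤ ‖f n x‖
    rw [norm_mul]
    nth_rewrite 2 [← one_mul ‖f n x‖]
    apply mul_le_mul_of_nonneg_right _ (norm_nonneg _)
    rw [Real.norm_eq_abs, abs_of_nonneg (by linarith [χle1 x])]
    linarith [χnn x]
  have mu1_2 : MemLp u1 2 (volume : Measure Plane) :=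
    hF2.of_le hu1cont.aestronglyMeasurable (Eventually.of_forall habs1)
  have mu1_4 : MemLp u1 4 (volume : Measure Plane) :=
    hF4.of_le hu1cont.aestronglyMeasurable (Eventually.of_forall habs1)
  have mu2_2 : MemLp u2 2 (volume : Measure Plane) :=
    hF2.of_le hu2cont.aestronglyMeasurable (Eventually.of_forall habs2)
  have mu2_4 : MemLp u2 4 (volume : Measure Plane) :=
    hF4.of_le hu2cont.aestronglyMeasurable (Eventually.of_forall habs2)
  have u1diff : Differentiable ℝ u1 := χdiff.mul hFdiff
  have u2diff : Differentiable ℝ u2 := (differentiable_const 1 |>.sub χdiff).mul hFdiff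
  have du1 : ∀ x, ‖fderiv ℝ u1 x‖ ≤ χ x * ‖fderiv ℝ (f n) x‖ + ε * ‖f n x‖ := by
    intro x
    have hder : fderiv ℝ u1 x = χ x • fderiv ℝ (f n) x + f n x • fderiv ℝ χ x := by
      rw [hu1def]
      exact fderiv_mul (χdiff x) (hFdiff x)
    rw [hder]
    calc ‖χ x • fderiv ℝ (f n) x + f n x • fderiv ℝ χ x‖
        ≤ ‖χ x • fderiv ℝ (f n) x‖ + ‖f n x • fderiv ℝ χ x‖ := norm_add_le _ _
      _ = |χ x| * ‖fderiv ℝ (f n) x‖ + |f n x| * ‖fderiv ℝ χ x‖ := by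
          rw [norm_smul, norm_smul, Real.norm_eq_abs, Real.norm_eq_abs]
      _ ≤ χ x * ‖fderiv ℝ (f n) x‖ + ε * ‖f n x‖ := by
          rw [abs_of_nonneg (χnn x)]
          have h2 : |f n x| * ‖fderiv ℝ χ x‖ ≤ ε * ‖f n x‖ := by
            rw [mul_comm ε, Real.norm_eq_abs]
            exact mul_le_mul_of_nonneg_left (χfd x) (abs_nonneg _)
          linarith
  have du2 : ∀ x, ‖fderiv ℝ u2 x‖ ≤ (1 - χ x) * ‖fderiv ℝ (f n) x‖ + ε * ‖f n x‖ := by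
    intro x
    have hδ : DifferentiableAt ℝ (fun y => 1 - χ y) x := (differentiableAt_const 1).sub (χdiff x)
    have hder : fderiv ℝ u2 x
        = (1 - χ x) • fderiv ℝ (f n) x + f n x • fderiv ℝ (fun y => 1 - χ y) x := by
      rw [hu2def]
      exact fderiv_mul hδ (hFdiff x)
    have hder2 : fderiv ℝ (fun y => (1:ℝ) - χ y) x = -fderiv ℝ χ x := by
      rw [fderiv_fun_sub (differentiableAt_const 1) (χdiff x), fderiv_fun_const]
      simp
    rw [hder, hder2]
    calc ‖(1 - χ x) • fderiv ℝ (f n) x + f n x • -fderiv ℝ χ x‖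
        ≤ ‖(1 - χ x) • fderiv ℝ (f n) x‖ + ‖f n x • -fderiv ℝ χ x‖ := norm_add_le _ _
      _ = |1 - χ x| * ‖fderiv ℝ (f n) x‖ + |f n x| * ‖fderiv ℝ χ x‖ := by
          rw [norm_smul, norm_smul, Real.norm_eq_abs, Real.norm_eq_abs, norm_neg]
      _ ≤ (1 - χ x) * ‖fderiv ℝ (f n) x‖ + ε * ‖f n x‖ := by
          rw [abs_of_nonneg (by linarith [χle1 x])]
          have h2 : |f n x| * ‖fderiv ℝ χ x‖ ≤ ε * ‖f n x‖ := by
            rw [mul_comm ε, Real.norm_eq_abs]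
            exact mul_le_mul_of_nonneg_left (χfd x) (abs_nonneg _)
          linarith
  have hbmem : MemLp (fun x => ‖fderiv ℝ (f n) x‖ + ε * ‖f n x‖) 2 (volume : Measure Plane) := by
    exact hFgrad.norm.add (hF2.norm.const_mul ε)
  have mdu1 : MemLp (fun x => fderiv ℝ u1 x) 2 (volume : Measure Plane) := by
    refine hbmem.of_le ((measurable_fderiv ℝ u1).aestronglyMeasurable)
      (Eventually.of_forall fun x => ?_)
    have hb : 0 ≤ ‖fderiv ℝ (f n) x‖ + ε * ‖f n x‖ := by positivity
    rw [Real.norm_eq_abs, abs_of_nonneg hb]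
    calc ‖fderiv ℝ u1 x‖ ≤ χ x * ‖fderiv ℝ (f n) x‖ + ε * ‖f n x‖ := du1 x
      _ ≤ ‖fderiv ℝ (f n) x‖ + ε * ‖f n x‖ := by
          have : χ x * ‖fderiv ℝ (f n) x‖ ≤ 1 * ‖fderiv ℝ (f n) x‖ :=
            mul_le_mul_of_nonneg_right (χle1 x) (norm_nonneg _)
          linarith
  have mdu2 : MemLp (fun x => fderiv ℝ u2 x) 2 (volume : Measure Plane) := by
    refine hbmem.of_le ((measurable_fderiv ℝ u2).aestronglyMeasurable)
      (Eventually.of_forall fun x => ?_)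
    have hb : 0 ≤ ‖fderiv ℝ (f n) x‖ + ε * ‖f n x‖ := by positivity
    rw [Real.norm_eq_abs, abs_of_nonneg hb]
    calc ‖fderiv ℝ u2 x‖ ≤ (1 - χ x) * ‖fderiv ℝ (f n) x‖ + ε * ‖f n x‖ := du2 x
      _ ≤ ‖fderiv ℝ (f n) x‖ + ε * ‖f n x‖ := by
          have : (1 - χ x) * ‖fderiv ℝ (f n) x‖ ≤ 1 * ‖fderiv ℝ (f n) x‖ :=
            mul_le_mul_of_nonneg_right (by linarith [χnn x]) (norm_nonneg _)
          linarith
  have hH1u1 : H1 u1 := ⟨u1diff, mu1_2, mu1_4, mdu1⟩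
  have hH1u2 : H1 u2 := ⟨u2diff, mu2_2, mu2_4, mdu2⟩
  -- integrability of all the squares/fourth powers
  have iF2 : Integrable (fun x => (f n x)^2) volume := int_sq hF2
  have iF4 : Integrable (fun x => (f n x)^4) volume := int_pow4 hF4
  have iG2 : Integrable (fun x => (g n x)^2) volume := int_sq (hgmem2 n)
  have iG4 : Integrable (fun x => (g n x)^4) volume := int_pow4 (hgmem4 n)
  have iF12 : Integrable (fun x => (f1 n x)^2) volume := int_sq (hf1 n).2.1
  have iu12 : Integrable (fun x => (u1 x)^2) volume := int_sq mu1_2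
  have iu22 : Integrable (fun x => (u2 x)^2) volume := int_sq mu2_2
  have iu14 : Integrable (fun x => (u1 x)^4) volume := int_pow4 mu1_4
  have iu24 : Integrable (fun x => (u2 x)^4) volume := int_pow4 mu2_4
  have inF : Integrable (fun x => ‖fderiv ℝ (f n) x‖^2) volume := int_normsq hFgrad
  have inu1 : Integrable (fun x => ‖fderiv ℝ u1 x‖^2) volume := int_normsq mdu1
  have inu2 : Integrable (fun x => ‖fderiv ℝ u2 x‖^2) volume := int_normsq mdu2
  -- ∫ |f| ‖∇f‖ ≤ 1
  have iHalf : Integrable (fun x => ((f n x)^2 + ‖fderiv ℝ (f n) x‖^2)/2) volume := by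
    exact (iF2.add inF).div_const 2
  have hABint : Integrable (fun x => ‖f n x‖ * ‖fderiv ℝ (f n) x‖) volume := by
    refine Integrable.mono' iHalf
      (hFdiff.continuous.norm.aestronglyMeasurable.mul
        ((measurable_fderiv ℝ (f n)).norm.aestronglyMeasurable))
      (Eventually.of_forall fun x => ?_)
    have he : ‖f n x‖^2 = (f n x)^2 := by rw [Real.norm_eq_abs, sq_abs]
    rw [Real.norm_eq_abs, abs_of_nonneg (mul_nonneg (norm_nonneg _) (norm_nonneg _))]
    nlinarith [sq_nonneg (‖f n x‖ - ‖fderiv ℝ (f n) x‖)]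
  have hAB : ∫ x : Plane, ‖f n x‖ * ‖fderiv ℝ (f n) x‖ ≤ 1 := by
    have hle := integral_mono hABint iHalf (fun x => by
      have he : ‖f n x‖^2 = (f n x)^2 := by rw [Real.norm_eq_abs, sq_abs]
      show ‖f n x‖ * ‖fderiv ℝ (f n) x‖ ≤ ((f n x)^2 + ‖fderiv ℝ (f n) x‖^2)/2
      nlinarith [sq_nonneg (‖f n x‖ - ‖fderiv ℝ (f n) x‖)])
    have hsum2 : ∫ x : Plane, ((f n x)^2 + ‖fderiv ℝ (f n) x‖^2) = 2 := by
      rw [integral_add iF2 inF, hnorm n, hgrad n]; norm_num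
    rw [integral_div, hsum2] at hle
    linarith
  -- the gradient sum bound
  have pt1 : ∀ x, ‖fderiv ℝ u1 x‖^2 + ‖fderiv ℝ u2 x‖^2
      ≤ ‖fderiv ℝ (f n) x‖^2 + 2*ε*(‖f n x‖ * ‖fderiv ℝ (f n) x‖) + 2*ε^2*(f n x)^2 := by
    intro x
    have h1 := du1 x
    have h2 := du2 x
    have hχ0 := χnn x
    have hχ1 := χle1 x
    have ha := norm_nonneg (fderiv ℝ (f n) x)
    have hb := norm_nonneg (f n x)
    have hA1 := norm_nonneg (fderiv ℝ u1 x)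
    have hA2 := norm_nonneg (fderiv ℝ u2 x)
    have he : ‖f n x‖^2 = (f n x)^2 := by rw [Real.norm_eq_abs, sq_abs]
    have s1 : ‖fderiv ℝ u1 x‖^2 ≤ (χ x * ‖fderiv ℝ (f n) x‖ + ε * ‖f n x‖)^2 := by
      nlinarith [h1, hA1]
    have s2 : ‖fderiv ℝ u2 x‖^2 ≤ ((1 - χ x) * ‖fderiv ℝ (f n) x‖ + ε * ‖f n x‖)^2 := by
      nlinarith [h2, hA2]
    have hcross : 0 ≤ (χ x) * (1 - χ x) * ‖fderiv ℝ (f n) x‖^2 :=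
      mul_nonneg (mul_nonneg hχ0 (by linarith)) (sq_nonneg _)
    nlinarith [s1, s2, hcross, he]
  have hGsum : (∫ x : Plane, ‖fderiv ℝ u1 x‖^2) + ∫ x : Plane, ‖fderiv ℝ u2 x‖^2
      ≤ 1 + 2*ε + 2*ε^2 := by
    have iLHS : Integrable (fun x => ‖fderiv ℝ u1 x‖^2 + ‖fderiv ℝ u2 x‖^2) volume := by
      exact inu1.add inu2
    have iT2 : Integrable (fun x => 2*ε*(‖f n x‖ * ‖fderiv ℝ (f n) x‖)) volume := by
      exact hABint.const_mul (2*ε)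
    have iT3 : Integrable (fun x => 2*ε^2*(f n x)^2) volume := by
      exact iF2.const_mul (2*ε^2)
    have iT12 : Integrable
        (fun x => ‖fderiv ℝ (f n) x‖^2 + 2*ε*(‖f n x‖ * ‖fderiv ℝ (f n) x‖)) volume := by
      exact inF.add iT2
    have iRHS : Integrable (fun x => ‖fderiv ℝ (f n) x‖^2
        + 2*ε*(‖f n x‖ * ‖fderiv ℝ (f n) x‖) + 2*ε^2*(f n x)^2) volume := by
      exact iT12.add iT3
    have h := integral_mono iLHS iRHS pt1
    rw [integral_add inu1 inu2, integral_add iT12 iT3, integral_add inF iT2,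
      integral_const_mul, integral_const_mul, hgrad n, hnorm n] at h
    have hh : 2*ε*(∫ x : Plane, ‖f n x‖ * ‖fderiv ℝ (f n) x‖) ≤ 2*ε*1 :=
      mul_le_mul_of_nonneg_left hAB (by linarith)
    linarith
  -- the mass bounds
  have ptm1 : ∀ x, (u1 x)^2 ≤ (1+ε)*(f1 n x)^2 + (1+η)*(g n x)^2 := by
    intro x
    rw [key1 x]
    have hc2 : (χ x * g n x)^2 ≤ (g n x)^2 := by
      rw [mul_pow]
      nth_rewrite 2 [← one_mul ((g n x)^2)]
      apply mul_le_mul_of_nonneg_right _ (sq_nonneg _)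
      nlinarith [χnn x, χle1 x]
    have hexp : η * (ε*(f1 n x) - χ x * g n x)^2
        = ε*(f1 n x)^2 - 2*(f1 n x)*(χ x * g n x) + η*(χ x * g n x)^2 := by
      calc η * (ε*(f1 n x) - χ x * g n x)^2
          = (ε*η)*(ε*(f1 n x)^2) - 2*(ε*η)*((f1 n x)*(χ x * g n x))
            + η*(χ x * g n x)^2 := by ring
        _ = ε*(f1 n x)^2 - 2*(f1 n x)*(χ x * g n x) + η*(χ x * g n x)^2 := by rw [hη]; ring
    have h0 : 0 ≤ η * (ε*(f1 n x) - χ x * g n x)^2 := by positivity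
    have hc2' : (1+η)*(χ x * g n x)^2 ≤ (1+η)*(g n x)^2 :=
      mul_le_mul_of_nonneg_left hc2 (by linarith)
    nlinarith [hexp, h0, hc2']
  have ptm2 : ∀ x, (u2 x)^2 ≤ (1+ε)*(f2 n x)^2 + (1+η)*(g n x)^2 := by
    intro x
    rw [key2 x]
    have hc2 : ((1 - χ x) * g n x)^2 ≤ (g n x)^2 := by
      rw [mul_pow]
      nth_rewrite 2 [← one_mul ((g n x)^2)]
      apply mul_le_mul_of_nonneg_right _ (sq_nonneg _)
      nlinarith [χnn x, χle1 x]
    have hexp : η * (ε*(f2 n x) - (1 - χ x) * g n x)^2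
        = ε*(f2 n x)^2 - 2*(f2 n x)*((1 - χ x) * g n x) + η*((1 - χ x) * g n x)^2 := by
      calc η * (ε*(f2 n x) - (1 - χ x) * g n x)^2
          = (ε*η)*(ε*(f2 n x)^2) - 2*(ε*η)*((f2 n x)*((1 - χ x) * g n x))
            + η*((1 - χ x) * g n x)^2 := by ring
        _ = _ := by rw [hη]; ring
    have h0 : 0 ≤ η * (ε*(f2 n x) - (1 - χ x) * g n x)^2 := by positivity
    have hc2' : (1+η)*((1 - χ x) * g n x)^2 ≤ (1+η)*(g n x)^2 :=
      mul_le_mul_of_nonneg_left hc2 (by linarith)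
    nlinarith [hexp, h0, hc2']
  have iF22 : Integrable (fun x => (f2 n x)^2) volume := int_sq (hf2 n).2.1
  have hm1int : ∫ x : Plane, (u1 x)^2 ≤ (1+ε)*(lam+ε) + (1+η)*ε^3 := by
    have iR1 : Integrable (fun x => (1+ε)*(f1 n x)^2) volume := by exact iF12.const_mul (1+ε)
    have iR2 : Integrable (fun x => (1+η)*(g n x)^2) volume := by exact iG2.const_mul (1+η)
    have hrhs : Integrable (fun x => (1+ε)*(f1 n x)^2 + (1+η)*(g n x)^2) volume := by
      exact iR1.add iR2
    have h := integral_mono iu12 hrhs ptm1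
    rw [integral_add iR1 iR2, integral_const_mul, integral_const_mul] at h
    have b1 : (1+ε)*(∫ x : Plane, (f1 n x)^2) ≤ (1+ε)*(lam+ε) :=
      mul_le_mul_of_nonneg_left hM1.le (by linarith)
    have b2 : (1+η)*(∫ x : Plane, (g n x)^2) ≤ (1+η)*ε^3 :=
      mul_le_mul_of_nonneg_left hg2n.le (by linarith)
    linarith
  have hm2int : ∫ x : Plane, (u2 x)^2 ≤ (1+ε)*(1-lam+ε) + (1+η)*ε^3 := by
    have iR1 : Integrable (fun x => (1+ε)*(f2 n x)^2) volume := by exact iF22.const_mul (1+ε)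
    have iR2 : Integrable (fun x => (1+η)*(g n x)^2) volume := by exact iG2.const_mul (1+η)
    have hrhs : Integrable (fun x => (1+ε)*(f2 n x)^2 + (1+η)*(g n x)^2) volume := by
      exact iR1.add iR2
    have h := integral_mono iu22 hrhs ptm2
    rw [integral_add iR1 iR2, integral_const_mul, integral_const_mul] at h
    have b1 : (1+ε)*(∫ x : Plane, (f2 n x)^2) ≤ (1+ε)*(1-lam+ε) :=
      mul_le_mul_of_nonneg_left hM2.le (by linarith)
    have b2 : (1+η)*(∫ x : Plane, (g n x)^2) ≤ (1+η)*ε^3 :=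
      mul_le_mul_of_nonneg_left hg2n.le (by linarith)
    linarith
  -- the L⁴ splitting
  have pt4 : ∀ x, (f n x)^4 ≤ (u1 x)^4 + (u2 x)^4 + (g n x)^4 := by
    intro x
    by_cases hx1 : f1 n x = 0
    · by_cases hx2 : f2 n x = 0
      · have hgx : g n x = f n x := by
          show f n x - f1 n x - f2 n x = f n x
          rw [hx1, hx2]; ring
        have hp1 : (0:ℝ) ≤ (u1 x)^4 := by positivity
        have hp2 : (0:ℝ) ≤ (u2 x)^4 := by positivity
        rw [hgx]; linarith
      · have hχx : χ x = 0 := χT x (Function.mem_support.mpr hx2)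
        have hu : u2 x = f n x := by
          show (1 - χ x) * f n x = f n x
          rw [hχx]; ring
        have hp1 : (0:ℝ) ≤ (u1 x)^4 := by positivity
        have hp3 : (0:ℝ) ≤ (g n x)^4 := by positivity
        rw [hu]; linarith
    · have hχx : χ x = 1 := χS x (Function.mem_support.mpr hx1)
      have hu : u1 x = f n x := by
        show χ x * f n x = f n x
        rw [hχx]; ring
      have hp2 : (0:ℝ) ≤ (u2 x)^4 := by positivity
      have hp3 : (0:ℝ) ≤ (g n x)^4 := by positivity
      rw [hu]; linarith
  have I4 : ∫ x : Plane, (f n x)^4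
      ≤ (∫ x : Plane, (u1 x)^4) + (∫ x : Plane, (u2 x)^4) + ∫ x : Plane, (g n x)^4 := by
    have iW : Integrable (fun x => (u1 x)^4 + (u2 x)^4) volume := by exact iu14.add iu24
    have iWG : Integrable (fun x => (u1 x)^4 + (u2 x)^4 + (g n x)^4) volume := by
      exact iW.add iG4
    have h := integral_mono iF4 iWG pt4
    rwa [integral_add iW iG4, integral_add iu14 iu24] at h
  -- Gagliardo–Nirenberg on the pieces
  have GN1 := hGN u1 hH1u1
  have GN2 := hGN u2 hH1u2
  have ha1nn : 0 ≤ ∫ x : Plane, ‖fderiv ℝ u1 x‖^2 := integral_nonneg fun x => by positivity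
  have ha2nn : 0 ≤ ∫ x : Plane, ‖fderiv ℝ u2 x‖^2 := integral_nonneg fun x => by positivity
  have hq : astar/2 * ∫ x : Plane, (g n x)^4 < ε := by
    have hpos : (0:ℝ) < astar/2 := by positivity
    have h := mul_lt_mul_of_pos_left hg4n hpos
    have e : astar/2 * (ε * (2/astar)) = ε := by field_simp
    rw [e] at h
    exact h
  have hI4' : astar/2 * ∫ x : Plane, (f n x)^4
      ≤ astar/2 * (∫ x : Plane, (u1 x)^4) + astar/2 * (∫ x : Plane, (u2 x)^4)
        + astar/2 * ∫ x : Plane, (g n x)^4 := by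
    have hpos : (0:ℝ) ≤ astar/2 := by positivity
    have h := mul_le_mul_of_nonneg_left I4 hpos
    rw [mul_add, mul_add] at h
    exact h
  set B : ℝ := (1+ε)*(m+ε) + (1+η)*ε^3 with hBdef
  have hm0 : 0 < m := lt_of_lt_of_le h0 hml
  have hBnn : 0 ≤ B := by
    have t1 : 0 < (1+ε)*(m+ε) := mul_pos (by linarith) (by linarith)
    have t2 : 0 ≤ (1+η)*ε^3 := mul_nonneg (by linarith) (by positivity)
    rw [hBdef]; linarith
  have hMB1 : ∫ x : Plane, (u1 x)^2 ≤ B := by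
    have t : (1+ε)*(lam+ε) ≤ (1+ε)*(m+ε) := mul_le_mul_of_nonneg_left (by linarith) (by linarith)
    rw [hBdef]; linarith
  have hMB2 : ∫ x : Plane, (u2 x)^2 ≤ B := by
    have t : (1+ε)*(1-lam+ε) ≤ (1+ε)*(m+ε) :=
      mul_le_mul_of_nonneg_left (by linarith) (by linarith)
    rw [hBdef]; linarith
  have t3 : (∫ x : Plane, ‖fderiv ℝ u1 x‖^2) * (∫ x : Plane, (u1 x)^2)
      ≤ (∫ x : Plane, ‖fderiv ℝ u1 x‖^2) * B := mul_le_mul_of_nonneg_left hMB1 ha1nn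
  have t4 : (∫ x : Plane, ‖fderiv ℝ u2 x‖^2) * (∫ x : Plane, (u2 x)^2)
      ≤ (∫ x : Plane, ‖fderiv ℝ u2 x‖^2) * B := mul_le_mul_of_nonneg_left hMB2 ha2nn
  have t6 : ((∫ x : Plane, ‖fderiv ℝ u1 x‖^2) + (∫ x : Plane, ‖fderiv ℝ u2 x‖^2)) * B
      ≤ (1 + 2*ε + 2*ε^2) * B := mul_le_mul_of_nonneg_right hGsum hBnn
  have hfinal : 1 - ε < (1 + 2*ε + 2*ε^2) * B + ε := by nlinarith [hA, hI4', GN1, GN2, t3, t4, t6, hq]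
  have hB2 : (1+η)*ε^3 = ε^3 + ε^2 := by
    calc (1+η)*ε^3 = ε^3 + (ε*η)*ε^2 := by ring
      _ = ε^3 + ε^2 := by rw [hη]; ring
  have hm_eq : m = 1 - 100*ε := by rw [hεdef]; ring
  rw [hBdef, hB2, hm_eq] at hfinal
  have h54 : ε^5 ≤ ε^4 := by nlinarith [pow_nonneg hεpos.le 4, hεle]
  nlinarith [hfinal, hεpos, h54, pow_nonneg hεpos.le 2, pow_nonneg hεpos.le 3,
    pow_nonneg hεpos.le 4]
end
end

section
/- Let V ∈ L^∞(ℝ²), a_n ↑ a*, and let u_n be a minimizer of E_{a_n} with ‖u_n‖_{L²} = 1. If lim_n E_{a_n} = ess inf V, then ∫(|∇u_n|² − (a_n/2)|u_n|⁴) → 0 as n → ∞. -/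
open MeasureTheory Filter
open scoped Topology

noncomputable section

/-- The Gross-Pitaevskii energy functional `E_a(u) = ∫(|∇u|² + V|u|² − (a/2)|u|⁴)`. -/
def gpEnergy (V : Plane → ℝ) (a : ℝ) (u : Plane → ℝ) : ℝ :=
  (∫ x : Plane, ‖fderiv ℝ u x‖ ^ 2) + (∫ x : Plane, V x * (u x) ^ 2)
    - a / 2 * ∫ x : Plane, (u x) ^ 4

/-- If `a_n ↑ a*`, `u_n` minimizes `E_{a_n}` among normalized `H¹` functions, and
`E_{a_n}(u_n) → ess inf V` (`c` being an essential lower bound of `V` with the energies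
converging to it), then `∫(|∇u_n|² − (a_n/2)|u_n|⁴) → 0`. -/
theorem blowup_kinetic_minus_quartic_tendsto_zero
    (V : Plane → ℝ) (hVmeas : Measurable V) (C : ℝ) (hVbdd : ∀ x, |V x| ≤ C)
    (astar : ℝ) (hastar : 0 < astar)
    (hGN : ∀ u : Plane → ℝ, H1 u →
      astar / 2 * ∫ x : Plane, (u x) ^ 4
        ≤ (∫ x : Plane, ‖fderiv ℝ u x‖ ^ 2) * ∫ x : Plane, (u x) ^ 2)
    (a : ℕ → ℝ) (ha0 : ∀ n, 0 < a n) (ha : ∀ n, a n < astar) (hmono : Monotone a)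
    (haT : Tendsto a atTop (𝓝 astar))
    (u : ℕ → Plane → ℝ) (hu : ∀ n, H1 (u n))
    (hnorm : ∀ n, ∫ x : Plane, (u n x) ^ 2 = 1)
    (hmin : ∀ n, ∀ v : Plane → ℝ, H1 v → (∫ x : Plane, (v x) ^ 2) = 1 →
      gpEnergy V (a n) (u n) ≤ gpEnergy V (a n) v)
    (c : ℝ) (hc : ∀ᵐ x : Plane, c ≤ V x)
    (hE : Tendsto (fun n => gpEnergy V (a n) (u n)) atTop (𝓝 c)) :
    Tendsto (fun n => (∫ x : Plane, ‖fderiv ℝ (u n) x‖ ^ 2)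
      - a n / 2 * ∫ x : Plane, (u n x) ^ 4) atTop (𝓝 0) := by
  -- lower bound: nonnegativity via GN
  have hQnn : ∀ n, 0 ≤ ∫ x : Plane, (u n x) ^ 4 := fun n =>
    integral_nonneg fun x => by positivity
  have hlow : ∀ n, 0 ≤ (∫ x : Plane, ‖fderiv ℝ (u n) x‖ ^ 2)
      - a n / 2 * ∫ x : Plane, (u n x) ^ 4 := by
    intro n
    have hgn := hGN (u n) (hu n)
    rw [hnorm n, mul_one] at hgn
    have h1 : a n / 2 * ∫ x : Plane, (u n x) ^ 4
        ≤ astar / 2 * ∫ x : Plane, (u n x) ^ 4 := by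
      apply mul_le_mul_of_nonneg_right _ (hQnn n)
      linarith [ha n]
    linarith
  -- integrability of u n ^ 2 and V * u n ^ 2
  have hsq : ∀ n, Integrable (fun x : Plane => (u n x) ^ 2) := by
    intro n
    have := (hu n).2.1
    have h := (memLp_two_iff_integrable_sq this.aestronglyMeasurable).mp this
    simpa [pow_two] using h
  have hVsq : ∀ n, Integrable (fun x : Plane => V x * (u n x) ^ 2) := by
    intro n
    exact (hsq n).bdd_mul hVmeas.aestronglyMeasurable
      (c := C) (Filter.Eventually.of_forall fun x => by simpa [Real.norm_eq_abs] using hVbdd x)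
  have hVlb : ∀ n, c ≤ ∫ x : Plane, V x * (u n x) ^ 2 := by
    intro n
    have : ∫ x : Plane, c * (u n x) ^ 2 ≤ ∫ x : Plane, V x * (u n x) ^ 2 := by
      apply integral_mono_ae ((hsq n).const_mul c) (hVsq n)
      filter_upwards [hc] with x hx
      exact mul_le_mul_of_nonneg_right hx (sq_nonneg _)
    calc c = c * ∫ x : Plane, (u n x) ^ 2 := by rw [hnorm n, mul_one]
      _ = ∫ x : Plane, c * (u n x) ^ 2 := (integral_const_mul c _).symm
      _ ≤ _ := this
  have hup : ∀ n, (∫ x : Plane, ‖fderiv ℝ (u n) x‖ ^ 2)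
      - a n / 2 * ∫ x : Plane, (u n x) ^ 4 ≤ gpEnergy V (a n) (u n) - c := by
    intro n
    have := hVlb n
    unfold gpEnergy
    linarith
  have hupT : Tendsto (fun n => gpEnergy V (a n) (u n) - c) atTop (𝓝 0) := by
    simpa using hE.sub_const c
  exact tendsto_of_tendsto_of_tendsto_of_le_of_le tendsto_const_nhds hupT hlow hup
end
end
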